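/- Let x be a point on a chord of the circle of radius R whose endpoints lie on the circle, with n the outward unit normal to the chord. Writing d(x) = R − |x| for the distance from x to the circle and δ(x) = √(R² − |x|² + (x·n)²) − x·n for the distance along the normal, one has 0 ≤ d(x) ≤ δ(x), and δ(x) − d(x) ≤ C h⁴ where h is the length of the chord and C depends only on R (assuming h ≤ R). -/

import Mathlib

lemma parseval2 (n u : EuclideanSpace ℝ (Fin 2)) (hn : ‖n‖ = 1) (hu : ‖u‖ = 1)
    (hnu : (inner ℝ n u : ℝ) = 0) (v : EuclideanSpace ℝ (Fin 2)) :
    ‖v‖^2 = (inner ℝ v n : ℝ)^2 + (inner ℝ v u : ℝ)^2 := by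
  have hnn : (inner ℝ n n : ℝ) = 1 := by
    rw [real_inner_self_eq_norm_sq, hn]; norm_num
  have huu : (inner ℝ u u : ℝ) = 1 := by
    rw [real_inner_self_eq_norm_sq, hu]; norm_num
  have hun : (inner ℝ u n : ℝ) = 0 := by rw [real_inner_comm]; exact hnu
  have hon : Orthonormal ℝ ![n, u] := by
    rw [orthonormal_iff_ite]
    intro i j
    fin_cases i <;> fin_cases j <;>
      simp only [Matrix.cons_val_zero, Matrix.cons_val_one, Matrix.head_cons] <;>
      norm_num <;>
      first
        | simpa using hnn
        | simpa using huu
        | simpa using hnu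
        | simpa using hun
  have hcard : Fintype.card (Fin 2) = Module.finrank ℝ (EuclideanSpace ℝ (Fin 2)) := by
    simp [finrank_euclideanSpace]
  have hsp : ⊤ ≤ Submodule.span ℝ (Set.range ![n, u]) := by
    rw [← coe_basisOfLinearIndependentOfCardEqFinrank hon.linearIndependent hcard]
    exact (basisOfLinearIndependentOfCardEqFinrank hon.linearIndependent hcard).span_eq.ge
  set OB := OrthonormalBasis.mk hon hsp with hOB
  have hcoe : ⇑OB = ![n, u] := OrthonormalBasis.coe_mk hon hsp
  have h := OB.sum_inner_mul_inner v v
  rw [Fin.sum_univ_two, hcoe] at h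
  simp only [Matrix.cons_val_zero, Matrix.cons_val_one, Matrix.head_cons] at h
  rw [real_inner_self_eq_norm_sq] at h
  rw [← h, real_inner_comm n v, real_inner_comm u v]
  ring

set_option maxHeartbeats 1000000 in
lemma key (R α ε : ℝ) (hR : 0 < R) (hε0 : 0 ≤ ε) (hεα : ε ≤ α) (hα : α ≤ R^2/4) :
    Real.sqrt (R^2 - ε) + Real.sqrt (R^2 - α + ε) - R - Real.sqrt (R^2 - α)
      ≤ 16 * α^2 / R^3 := by
  have hα0 : 0 ≤ α := le_trans hε0 hεα
  set A := Real.sqrt (R^2 - ε) with hA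
  set B := Real.sqrt (R^2 - α + ε) with hB
  set T := Real.sqrt (R^2 - α) with hT
  have hA2 : A^2 = R^2 - ε := Real.sq_sqrt (by nlinarith)
  have hB2 : B^2 = R^2 - α + ε := Real.sq_sqrt (by nlinarith)
  have hT2 : T^2 = R^2 - α := Real.sq_sqrt (by nlinarith)
  have hA0 : 0 ≤ A := Real.sqrt_nonneg _
  have hB0 : 0 ≤ B := Real.sqrt_nonneg _
  have hT0 : 0 ≤ T := Real.sqrt_nonneg _
  have hAlo : R/2 ≤ A := by
    rw [hA, Real.le_sqrt (by positivity) (by nlinarith)]; nlinarith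
  have hBlo : R/2 ≤ B := by
    rw [hB, Real.le_sqrt (by positivity) (by nlinarith)]; nlinarith
  have hTlo : R/2 ≤ T := by
    rw [hT, Real.le_sqrt (by positivity) (by nlinarith)]; nlinarith
  have hAhi : A ≤ R := by nlinarith
  have hBhi : B ≤ R := by nlinarith
  have hThi : T ≤ R := by nlinarith
  set x := A + B - R - T with hx
  set y := R + A - B - T with hy
  have id1 : x * ((B + T) * (R + A)) = ε * y := by
    rw [hx, hy]; linear_combination (B+T)*hA2 + (R+A)*hB2 - (R+A)*hT2
  have id2 : y * ((R + T) * (A + B)) = α * (A + B) + (α - 2*ε) * (R + T) := by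
    rw [hy]; linear_combination -(A+B)*hT2 + (R+T)*hA2 - (R+T)*hB2
  have hrhs : 0 ≤ 16 * α^2 / R^3 := by positivity
  rcases le_or_gt x 0 with hx0 | hx0
  · linarith
  · have hBTRA : R * R ≤ (B + T) * (R + A) :=
      mul_le_mul (by linarith) (by linarith) hR.le (by linarith)
    have hRTAB : R * R ≤ (R + T) * (A + B) :=
      mul_le_mul (by linarith) (by linarith) hR.le (by linarith)
    have hy0 : 0 < y := by
      by_contra hyn
      push_neg at hyn
      have h1 : x * ((B + T) * (R + A)) ≤ 0 :=
        id1 ▸ mul_nonpos_of_nonneg_of_nonpos hε0 hyn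
      have h2 : 0 < x * ((B + T) * (R + A)) :=
        mul_pos hx0 (lt_of_lt_of_le (mul_pos hR hR) hBTRA)
      exact absurd h1 (not_le.mpr h2)
    have h6 : α * (A + B) + (α - 2*ε) * (R + T) ≤ 4 * R * α := by
      have e1 : α * (A + B) ≤ α * (2*R) := mul_le_mul_of_nonneg_left (by linarith) hα0
      have e2 : (α - 2*ε) * (R + T) ≤ α * (R + T) :=
        mul_le_mul_of_nonneg_right (by linarith) (by linarith)
      have e3 : α * (R + T) ≤ α * (2*R) := mul_le_mul_of_nonneg_left (by linarith) hα0
      nlinarith [e1, e2, e3]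
    have h5 : y * (R * R) ≤ y * ((R + T) * (A + B)) :=
      mul_le_mul_of_nonneg_left hRTAB hy0.le
    have hy4 : y * R ≤ 4 * α := by nlinarith [h5, id2, h6, mul_pos hR hR]
    have h7 : x * (R * R) ≤ ε * y := by
      calc x * (R * R) ≤ x * ((B + T) * (R + A)) :=
            mul_le_mul_of_nonneg_left hBTRA hx0.le
        _ = ε * y := id1
    have h8 : x * R^3 ≤ 4 * α^2 := by
      nlinarith [mul_le_mul_of_nonneg_right h7 hR.le,
        mul_le_mul_of_nonneg_left hy4 hε0,
        mul_le_mul_of_nonneg_right hεα (by positivity : (0:ℝ) ≤ 4*α)]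
    rw [le_div_iff₀ (by positivity)]
    nlinarith [sq_nonneg α]


private lemma aux_norm_le {m R : ℝ} (hm : 0 ≤ m) (hR : 0 < R) (h : m^2 ≤ R^2) : m ≤ R := by
  nlinarith

private lemma aux_t_le {t m : ℝ} (ht : 0 ≤ t) (hm : 0 ≤ m) (h : t^2 ≤ m^2) : t ≤ m := by
  nlinarith

private lemma aux_eps (c L : ℝ) (hc0 : 0 ≤ c) (hc1 : c ≤ 1) :
    (c * (-(L / 2)) + (1 - c) * (L / 2)) ^ 2 ≤ L ^ 2 / 4 := by
  nlinarith [mul_nonneg hc0 (sub_nonneg.2 hc1), sq_nonneg L]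

private lemma aux_sq (R t m ε : ℝ) (hm2 : m ^ 2 = t ^ 2 + ε) (htm : t ≤ m) (hmR : m ≤ R) :
    (R + t - m) ^ 2 ≤ R ^ 2 - ε := by
  nlinarith [mul_nonneg (sub_nonneg.2 htm) (sub_nonneg.2 hmR)]

set_option maxHeartbeats 1600000 in
/-- For a point `x` on a chord of the circle of radius `R` (endpoints
`a`, `b` on the circle), `n` the outward unit normal to the chord, `d(x) = R − ‖x‖`
and `δ(x) = √(R² − ‖x‖² + (x·n)²) − x·n`, one has `0 ≤ d(x) ≤ δ(x)` and
`δ(x) − d(x) ≤ C h⁴` with `h` the chord length and `C` depending only on `R`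
(assuming `h ≤ R`). -/
theorem stmt2 (R : ℝ) (hR : 0 < R) :
    ∃ C > 0, ∀ (a b x n : EuclideanSpace ℝ (Fin 2)),
      ‖a‖ = R → ‖b‖ = R → a ≠ b →
      x ∈ segment ℝ a b →
      ‖n‖ = 1 → (inner ℝ (b - a) n : ℝ) = 0 → 0 < (inner ℝ x n : ℝ) →
      ‖b - a‖ ≤ R →
      0 ≤ R - ‖x‖ ∧
      R - ‖x‖ ≤ Real.sqrt (R ^ 2 - ‖x‖ ^ 2 + (inner ℝ x n : ℝ) ^ 2) - (inner ℝ x n : ℝ) ∧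
      (Real.sqrt (R ^ 2 - ‖x‖ ^ 2 + (inner ℝ x n : ℝ) ^ 2) - (inner ℝ x n : ℝ)) - (R - ‖x‖)
        ≤ C * ‖b - a‖ ^ 4 := by
  refine ⟨1 / R ^ 3, by positivity, ?_⟩
  intro a b x n ha hb hab hseg hn hbn hxn hhR
  set L := ‖b - a‖ with hLdef
  have hL : 0 < L := norm_pos_iff.mpr (sub_ne_zero.mpr hab.symm)
  set u : EuclideanSpace ℝ (Fin 2) := L⁻¹ • (b - a) with hudef
  have hu : ‖u‖ = 1 := by
    rw [hudef, norm_smul, norm_inv, norm_norm, ← hLdef, inv_mul_cancel₀ hL.ne']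
  have hnu : (inner ℝ n u : ℝ) = 0 := by
    rw [hudef, real_inner_smul_right, real_inner_comm, hbn, mul_zero]
  have P := parseval2 n u hn hu hnu
  obtain ⟨c, d, hc, hd, hcd, hx⟩ := hseg
  set t := (inner ℝ x n : ℝ) with htdef
  -- all points of the chord have the same inner product with n
  have habn : (inner ℝ a n : ℝ) = (inner ℝ b n : ℝ) := by
    have := hbn
    rw [inner_sub_left] at this
    linarith
  have hxn_eq : t = c * (inner ℝ a n : ℝ) + d * (inner ℝ b n : ℝ) := by
    rw [htdef, ← hx, inner_add_left, real_inner_smul_left, real_inner_smul_left]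
  have htan : (inner ℝ a n : ℝ) = t := by
    rw [hxn_eq, habn]; linear_combination (-(inner ℝ b n : ℝ)) * hcd
  have htbn : (inner ℝ b n : ℝ) = t := by rw [← habn]; exact htan
  -- u-components
  have hba_u : (inner ℝ (b - a) u : ℝ) = L := by
    rw [hudef, real_inner_smul_right, real_inner_self_eq_norm_sq, ← hLdef, sq,
      inv_mul_cancel_left₀ hL.ne']
  have hsum_u : (inner ℝ (a + b) u : ℝ) = 0 := by
    rw [hudef, real_inner_smul_right]
    have e : (inner ℝ (a + b) (b - a) : ℝ) = ‖b‖ ^ 2 - ‖a‖ ^ 2 := by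
      rw [inner_add_left, inner_sub_right, inner_sub_right,
        real_inner_self_eq_norm_sq, real_inner_self_eq_norm_sq, real_inner_comm a b]
      ring
    rw [e, ha, hb]; ring
  set sa := (inner ℝ a u : ℝ) with hsadef
  set sb := (inner ℝ b u : ℝ) with hsbdef
  have hsub : sb - sa = L := by
    rw [hsadef, hsbdef, ← inner_sub_left]; exact hba_u
  have hadd : sa + sb = 0 := by
    rw [hsadef, hsbdef, ← inner_add_left]; exact hsum_u
  have hsa : sa = -(L / 2) := by linarith
  set sx := (inner ℝ x u : ℝ) with hsxdef
  have hsx_eq : sx = c * sa + d * sb := by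
    rw [hsxdef, hsadef, hsbdef, ← hx, inner_add_left, real_inner_smul_left,
      real_inner_smul_left]
  set α := L ^ 2 / 4 with hαdef
  set ε := sx ^ 2 with hεdef
  -- Parseval for a and x
  have hPa : R ^ 2 = t ^ 2 + α := by
    have := P a
    rw [ha, htan, ← hsadef, hsa] at this
    rw [this, hαdef]; ring
  have hm2 : ‖x‖ ^ 2 = t ^ 2 + ε := by
    have := P x
    rw [← htdef, ← hsxdef, ← hεdef] at this
    exact this
  have ht2 : t ^ 2 = R ^ 2 - α := by linarith
  have hεα : ε ≤ α := by
    rw [hεdef, hαdef, hsx_eq, hsa]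
    have hsb' : sb = L / 2 := by linarith
    rw [hsb']
    have hdc : d = 1 - c := by linarith
    rw [hdc]
    exact aux_eps c L hc (by linarith)
  have hε0 : 0 ≤ ε := sq_nonneg sx
  have hαR : α ≤ R ^ 2 / 4 := by
    have := pow_le_pow_left₀ hL.le hhR 2
    rw [hαdef]; linarith
  have hmR : ‖x‖ ≤ R := aux_norm_le (norm_nonneg x) hR (by linarith)
  have htm : t ≤ ‖x‖ := aux_t_le hxn.le (norm_nonneg x) (by linarith)
  have harg : R ^ 2 - ‖x‖ ^ 2 + t ^ 2 = R ^ 2 - ε := by linarith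
  refine ⟨by linarith, ?_, ?_⟩
  · rw [harg]
    have h1 : R + t - ‖x‖ ≤ Real.sqrt (R ^ 2 - ε) := by
      rw [Real.le_sqrt (by linarith) (by linarith)]
      exact aux_sq R t ‖x‖ ε hm2 htm hmR
    linarith
  · rw [harg]
    have hts : Real.sqrt (R ^ 2 - α) = t := by
      rw [show R ^ 2 - α = t ^ 2 by linarith, Real.sqrt_sq hxn.le]
    have hms : Real.sqrt (R ^ 2 - α + ε) = ‖x‖ := by
      rw [show R ^ 2 - α + ε = ‖x‖ ^ 2 by linarith, Real.sqrt_sq (norm_nonneg x)]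
    have hkey := key R α ε hR hε0 hεα hαR
    rw [hts, hms] at hkey
    have hC : 16 * α ^ 2 / R ^ 3 = 1 / R ^ 3 * L ^ 4 := by
      rw [hαdef]; field_simp; ring
    linarith [hkey, hC.le, hC.ge]
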